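/- Let J ⊂ ℝ be a bounded interval and let μ be a finite Borel measure on J satisfying the doubling condition μ((x−2r,x+2r) ∩ J) ≤ b μ((x−r,x+r) ∩ J) for all x ∈ J and 0 < r < |J|, with μ(I) > 0 for every nondegenerate subinterval I. If r : J → ℝ satisfies 1 ≤ r_-(J) ≤ r_+(J) < ∞ and r ∈ LH(J), then there exists a constant C > 0 such that μ(I)^{r_-(I) − r_+(I)} ≤ C for all subintervals I of J. -/

import Mathlib

open MeasureTheory Set Filter
open scoped ENNReal NNReal

/-- Variable exponent Lebesgue norm of `f` on `E` w.r.t. measure `μ`. -/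
noncomputable def vLpNorm (μ : Measure ℝ) (p : ℝ → ℝ) (E : Set ℝ) (f : ℝ → ℝ) : ℝ :=
  sInf {lam : ℝ | 0 < lam ∧ (∫ x in E, |f x / lam| ^ p x ∂μ) ≤ 1}

/-- The variable exponent norm of `f` on `E` is finite. -/
def vLpFinite (μ : Measure ℝ) (p : ℝ → ℝ) (E : Set ℝ) (f : ℝ → ℝ) : Prop :=
  ∃ lam : ℝ, 0 < lam ∧ (∫ x in E, |f x / lam| ^ p x ∂μ) ≤ 1

/-- Local log-Hölder continuity of `p` on `E`. -/
def LogHolder (p : ℝ → ℝ) (E : Set ℝ) : Prop :=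
  ∃ c : ℝ, 0 < c ∧ ∀ x ∈ E, ∀ y ∈ E, |x - y| ≤ 1/2 →
    |p x - p y| ≤ c / (-Real.log |x - y|)

/-- The conjugate exponent function `p'(x) = p(x)/(p(x)-1)`. -/
noncomputable def pconj (p : ℝ → ℝ) (x : ℝ) : ℝ := p x / (p x - 1)

/-- Doubling condition for the measure `u(x) dx` on the interval `[A,B]`. -/
def DCond (u : ℝ → ℝ) (A B : ℝ) : Prop :=
  ∃ b : ℝ, 0 < b ∧ ∀ x ∈ Icc A B, ∀ r : ℝ, 0 < r → r < B - A →
    (∫ y in Ioo (x - 2*r) (x + 2*r) ∩ Icc A B, u y) ≤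
      b * ∫ y in Ioo (x - r) (x + r) ∩ Icc A B, u y

lemma doubling_lower_aux (A B : ℝ) (hAB : A < B) (μ : Measure ℝ) [IsFiniteMeasure μ]
    (b0 : ℝ≥0∞) (hbT : b0 < ⊤)
    (hdb : ∀ x ∈ Icc A B, ∀ ρ : ℝ, 0 < ρ → ρ < B - A →
      μ (Ioo (x - 2*ρ) (x + 2*ρ) ∩ Icc A B) ≤ b0 * μ (Ioo (x - ρ) (x + ρ) ∩ Icc A B))
    (hpos : ∀ a b : ℝ, A ≤ a → a < b → b ≤ B → 0 < μ (Icc a b)) :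
    ∃ m K : ℝ, 0 < m ∧ 0 ≤ K ∧ ∀ a b : ℝ, A ≤ a → a < b → b ≤ B →
      m * (b - a) ^ K ≤ (μ (Icc a b)).toReal := by
  set β : ℝ := max 2 b0.toReal with hβdef
  have hβ2 : (2:ℝ) ≤ β := le_max_left _ _
  set K : ℝ := Real.logb 2 β with hKdef
  have hK0 : 0 ≤ K := Real.logb_nonneg one_lt_two (by linarith)
  set A' : ℝ := A + (B-A)/4 with hA'def
  set B' : ℝ := B - (B-A)/4 with hB'def
  have hm0 : 0 < μ (Icc A' B') := hpos A' B' (by simp [hA'def]; linarith) (by rw [hA'def, hB'def]; linarith) (by simp [hB'def]; linarith)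
  set m₀ : ℝ := (μ (Icc A' B')).toReal with hm₀def
  have hm₀ : 0 < m₀ := ENNReal.toReal_pos hm0.ne' (measure_ne_top μ _)
  refine ⟨m₀ / (4*(B-A)) ^ K, K, div_pos hm₀ (Real.rpow_pos_of_pos (by linarith) K), hK0, ?_⟩
  intro a b haA hab hbB
  set ρ : ℝ := (b - a)/2 with hρdef
  set x : ℝ := (a + b)/2 with hxdef
  have hρ : 0 < ρ := by rw [hρdef]; linarith
  have hρBA : ρ < B - A := by rw [hρdef]; linarith
  have hxJ : x ∈ Icc A B := ⟨by rw [hxdef]; linarith, by rw [hxdef]; linarith⟩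
  have key : ∀ n : ℕ, (∀ k, k < n → (2:ℝ)^k * ρ < B - A) →
      μ (Ioo (x - 2^n * ρ) (x + 2^n * ρ) ∩ Icc A B) ≤
        b0^n * μ (Ioo (x - ρ) (x + ρ) ∩ Icc A B) := by
    intro n
    induction n with
    | zero => intro _; simp
    | succ n ih =>
      intro h
      have h1 : (2:ℝ)^n * ρ < B - A := h n (Nat.lt_succ_self n)
      have h2 : 0 < (2:ℝ)^n * ρ := by positivity
      have hstep := hdb x hxJ ((2:ℝ)^n * ρ) h2 h1
      have e1 : x - 2^(n+1) * ρ = x - 2*((2:ℝ)^n * ρ) := by ring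
      have e2 : x + 2^(n+1) * ρ = x + 2*((2:ℝ)^n * ρ) := by ring
      rw [e1, e2]
      calc μ (Ioo (x - 2*((2:ℝ)^n * ρ)) (x + 2*((2:ℝ)^n * ρ)) ∩ Icc A B)
          ≤ b0 * μ (Ioo (x - 2^n*ρ) (x + 2^n*ρ) ∩ Icc A B) := hstep
        _ ≤ b0 * (b0^n * μ (Ioo (x - ρ) (x + ρ) ∩ Icc A B)) :=
            mul_le_mul_right (ih fun k hk => h k (hk.trans (Nat.lt_succ_self n))) _
        _ = b0^(n+1) * μ (Ioo (x - ρ) (x + ρ) ∩ Icc A B) := by rw [pow_succ]; ring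
  have hex : ∃ n : ℕ, B - A ≤ 2^n * ρ := by
    obtain ⟨n, hn⟩ := pow_unbounded_of_one_lt ((B-A)/ρ) (one_lt_two (α := ℝ))
    exact ⟨n, le_of_lt (by rw [div_lt_iff₀ hρ] at hn; linarith)⟩
  set n := Nat.find hex with hndef
  have hn : B - A ≤ 2^n * ρ := Nat.find_spec hex
  have hmin : ∀ k, k < n → (2:ℝ)^k * ρ < B - A := fun k hk =>
    lt_of_not_ge (Nat.find_min hex hk)
  have hcov : Icc A' B' ⊆ Ioo (x - 2^n*ρ) (x + 2^n*ρ) ∩ Icc A B := by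
    intro y hy
    obtain ⟨hy1, hy2⟩ := hy
    rw [hA'def] at hy1; rw [hB'def] at hy2
    have hx1 : A ≤ x := hxJ.1
    have hx2 : x ≤ B := hxJ.2
    refine ⟨⟨by linarith, by linarith⟩, ⟨by linarith, by linarith⟩⟩
  have hsub : Ioo (x - ρ) (x + ρ) ∩ Icc A B ⊆ Icc a b := by
    have ea : x - ρ = a := by rw [hxdef, hρdef]; ring
    have eb : x + ρ = b := by rw [hxdef, hρdef]; ring
    rw [ea, eb]
    exact (inter_subset_left).trans Ioo_subset_Icc_self
  have chain : μ (Icc A' B') ≤ b0 ^ n * μ (Icc a b) :=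
    calc μ (Icc A' B') ≤ μ (Ioo (x - 2^n*ρ) (x + 2^n*ρ) ∩ Icc A B) := measure_mono hcov
      _ ≤ b0^n * μ (Ioo (x - ρ) (x + ρ) ∩ Icc A B) := key n hmin
      _ ≤ b0^n * μ (Icc a b) := mul_le_mul_right (measure_mono hsub) _
  have hfin : b0^n * μ (Icc a b) ≠ ⊤ :=
    ENNReal.mul_ne_top (ENNReal.pow_ne_top hbT.ne) (measure_ne_top μ _)
  have h1 : m₀ ≤ b0.toReal ^ n * (μ (Icc a b)).toReal := by
    have := ENNReal.toReal_mono hfin chain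
    rwa [ENNReal.toReal_mul, ENNReal.toReal_pow] at this
  set t : ℝ := (μ (Icc a b)).toReal with htdef
  have ht0 : 0 ≤ t := ENNReal.toReal_nonneg
  have h2 : m₀ ≤ β ^ n * t := by
    have : b0.toReal ^ n ≤ β ^ n := pow_le_pow_left₀ ENNReal.toReal_nonneg (le_max_right _ _) n
    nlinarith
  have h2n : (2:ℝ)^n * ρ ≤ 2*(B-A) := by
    rcases Nat.eq_zero_or_eq_succ_pred n with h | h
    · rw [h]; simpa using (by linarith : ρ ≤ 2*(B-A))
    · have hk := hmin n.pred (by omega)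
      rw [h, pow_succ]; nlinarith
  have h2nb : (2:ℝ)^n ≤ 4*(B-A)/(b-a) := by
    rw [le_div_iff₀ (by linarith : (0:ℝ) < b - a)]
    rw [hρdef] at h2n
    nlinarith
  have hβK : (β : ℝ) ^ n = ((2:ℝ)^n : ℝ) ^ K := by
    have h2K : (2:ℝ) ^ K = β := Real.rpow_logb two_pos (by norm_num) (by linarith)
    rw [← h2K, ← Real.rpow_natCast ((2:ℝ)^K) n, ← Real.rpow_natCast (2:ℝ) n,
        ← Real.rpow_mul (by norm_num), ← Real.rpow_mul (by norm_num), mul_comm]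
  have h3 : ((2:ℝ)^n : ℝ) ^ K ≤ (4*(B-A)/(b-a)) ^ K :=
    Real.rpow_le_rpow (by positivity) h2nb hK0
  have hdivr : (4*(B-A)/(b-a))^K = (4*(B-A))^K / (b-a)^K :=
    Real.div_rpow (by linarith) (by linarith) K
  have hQ : 0 < (b-a)^K := Real.rpow_pos_of_pos (by linarith) K
  have hP : 0 < (4*(B-A))^K := Real.rpow_pos_of_pos (by linarith) K
  have hmain : m₀ ≤ (4*(B-A))^K / (b-a)^K * t := by
    rw [← hdivr]
    calc m₀ ≤ β ^ n * t := h2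
      _ = ((2:ℝ)^n : ℝ) ^ K * t := by rw [hβK]
      _ ≤ (4*(B-A)/(b-a))^K * t := mul_le_mul_of_nonneg_right h3 ht0
  rw [div_mul_eq_mul_div, div_le_iff₀ hP]
  have := mul_le_mul_of_nonneg_right hmain hQ.le
  calc m₀ * (b-a)^K ≤ (4*(B-A))^K / (b-a)^K * t * (b-a)^K := this
    _ = t * (4*(B-A))^K := by field_simp

/-- For a finite doubling measure on a bounded interval and a log-Hölder
continuous exponent, `μ(I)^{r_-(I) - r_+(I)}` is uniformly bounded over subintervals. -/
theorem stmt2 (A B : ℝ) (hAB : A < B)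
    (μ : Measure ℝ) [IsFiniteMeasure μ]
    (hdbl : ∃ b : ℝ≥0∞, 0 < b ∧ b < ⊤ ∧ ∀ x ∈ Icc A B, ∀ ρ : ℝ, 0 < ρ → ρ < B - A →
      μ (Ioo (x - 2*ρ) (x + 2*ρ) ∩ Icc A B) ≤ b * μ (Ioo (x - ρ) (x + ρ) ∩ Icc A B))
    (hpos : ∀ a b : ℝ, A ≤ a → a < b → b ≤ B → 0 < μ (Icc a b))
    (r : ℝ → ℝ) (hrmeas : Measurable r)
    (hr1 : 1 ≤ sInf (r '' Icc A B)) (hr2 : BddAbove (r '' Icc A B))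
    (hLH : LogHolder r (Icc A B)) :
    ∃ C : ℝ, 0 < C ∧ ∀ a b : ℝ, A ≤ a → a ≤ b → b ≤ B →
      (μ (Icc a b)).toReal ^ (sInf (r '' Icc a b) - sSup (r '' Icc a b)) ≤ C := by
  obtain ⟨b0, hb0, hbT, hdb⟩ := hdbl
  obtain ⟨m, K, hm, hK0, hlow⟩ := doubling_lower_aux A B hAB μ b0 hbT hdb hpos
  obtain ⟨c, hc0, hcH⟩ := hLH
  have hbbJ : BddBelow (r '' Icc A B) := by
    by_contra h
    rw [Real.sInf_of_not_bddBelow h] at hr1; linarith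
  have hJne : (r '' Icc A B).Nonempty := (nonempty_Icc.mpr hAB.le).image r
  set D : ℝ := sSup (r '' Icc A B) - sInf (r '' Icc A B) with hDdef
  have hD0 : 0 ≤ D := sub_nonneg.mpr (csInf_le_csSup hJne hbbJ hr2)
  set t₀ : ℝ := m * (1/2 : ℝ) ^ K with ht₀def
  have ht₀ : 0 < t₀ := mul_pos hm (Real.rpow_pos_of_pos (by norm_num) K)
  refine ⟨max 1 (max (Real.exp (D * max 0 (-Real.log m) + K*c))
      (Real.exp (D * max 0 (-Real.log t₀)))),
    lt_of_lt_of_le one_pos (le_max_left _ _), ?_⟩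
  intro a b haA hab hbB
  rcases eq_or_lt_of_le hab with rfl | hab'
  · rw [Icc_self, image_singleton, csSup_singleton, csInf_singleton, sub_self, Real.rpow_zero]
    exact le_max_left _ _
  have hIne : (r '' Icc a b).Nonempty := (nonempty_Icc.mpr hab).image r
  have hIsub : r '' Icc a b ⊆ r '' Icc A B := image_mono (Icc_subset_Icc haA hbB)
  have hbbI : BddBelow (r '' Icc a b) := hbbJ.mono hIsub
  have hbaI : BddAbove (r '' Icc a b) := hr2.mono hIsub
  set δ : ℝ := sSup (r '' Icc a b) - sInf (r '' Icc a b) with hδdef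
  have hδ0 : 0 ≤ δ := sub_nonneg.mpr (csInf_le_csSup hIne hbbI hbaI)
  have hδD : δ ≤ D :=
    sub_le_sub (csSup_le_csSup hr2 hIne hIsub) (csInf_le_csInf hbbJ hIne hIsub)
  set t : ℝ := (μ (Icc a b)).toReal with htdef
  have hba0 : (0:ℝ) < b - a := by linarith
  have hlowab := hlow a b haA hab' hbB
  have hrp : 0 < (b-a) ^ K := Real.rpow_pos_of_pos hba0 K
  have ht0 : 0 < t := lt_of_lt_of_le (mul_pos hm hrp) hlowab
  have hgoal : t ^ (sInf (r '' Icc a b) - sSup (r '' Icc a b))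
      = Real.exp (δ * (-Real.log t)) := by
    have e : sInf (r '' Icc a b) - sSup (r '' Icc a b) = -δ := by rw [hδdef]; ring
    rw [e, Real.rpow_def_of_pos ht0]
    congr 1; ring
  rw [hgoal]
  rcases le_or_gt (b - a) (1/2 : ℝ) with hsmall | hlarge
  · -- small interval case
    have hL : 0 < -Real.log (b - a) := by
      rw [neg_pos]
      exact Real.log_neg hba0 (by linarith)
    have hkey : ∀ y ∈ Icc a b, ∀ y' ∈ Icc a b,
        |r y - r y'| ≤ c / (-Real.log (b - a)) := by
      intro y hy y' hy'
      have hyJ : y ∈ Icc A B := Icc_subset_Icc haA hbB hy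
      have hy'J : y' ∈ Icc A B := Icc_subset_Icc haA hbB hy'
      have habs : |y - y'| ≤ b - a := by
        rw [abs_sub_le_iff]
        exact ⟨by linarith [hy.1, hy.2, hy'.1, hy'.2], by linarith [hy.1, hy.2, hy'.1, hy'.2]⟩
      rcases eq_or_ne y y' with rfl | hne
      · simpa using le_of_lt (div_pos hc0 hL)
      · have h0 : 0 < |y - y'| := abs_pos.mpr (sub_ne_zero.mpr hne)
        have h1 := hcH y hyJ y' hy'J (habs.trans hsmall)
        have h2 : -Real.log (b-a) ≤ -Real.log |y - y'| :=
          neg_le_neg (Real.log_le_log h0 habs)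
        exact h1.trans (div_le_div_of_nonneg_left hc0.le hL h2)
    have hδc : δ ≤ c / (-Real.log (b - a)) := by
      rw [hδdef, sub_le_iff_le_add]
      apply csSup_le hIne
      rintro z ⟨y, hy, rfl⟩
      have : r y - c / (-Real.log (b - a)) ≤ sInf (r '' Icc a b) := by
        apply le_csInf hIne
        rintro w ⟨y', hy', rfl⟩
        have := hkey y hy y' hy'
        have h' : r y - r y' ≤ c / (-Real.log (b - a)) := (le_abs_self _).trans this
        linarith
      linarith
    have hlogt : -Real.log t ≤ -Real.log m + K * (-Real.log (b - a)) := by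
      have hlog : Real.log m + K * Real.log (b - a) ≤ Real.log t := by
        have h := Real.log_le_log (mul_pos hm hrp) hlowab
        rwa [Real.log_mul hm.ne' hrp.ne', Real.log_rpow hba0] at h
      linarith
    have hb1 : δ * (-Real.log t) ≤ D * max 0 (-Real.log m) + K * c := by
      have e2 : δ * (-Real.log m) ≤ D * max 0 (-Real.log m) :=
        calc δ * (-Real.log m) ≤ δ * max 0 (-Real.log m) :=
              mul_le_mul_of_nonneg_left (le_max_right _ _) hδ0
          _ ≤ D * max 0 (-Real.log m) :=
              mul_le_mul_of_nonneg_right hδD (le_max_left 0 _)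
      have e3 : δ * (K * (-Real.log (b-a))) ≤ K * c := by
        have h' : δ * (-Real.log (b-a)) ≤ c := (le_div_iff₀ hL).mp hδc
        calc δ * (K * (-Real.log (b-a))) = K * (δ * (-Real.log (b-a))) := by ring
          _ ≤ K * c := mul_le_mul_of_nonneg_left h' hK0
      calc δ * (-Real.log t) ≤ δ * (-Real.log m + K * (-Real.log (b-a))) :=
            mul_le_mul_of_nonneg_left hlogt hδ0
        _ = δ * (-Real.log m) + δ * (K * (-Real.log (b-a))) := by ring
        _ ≤ D * max 0 (-Real.log m) + K * c := add_le_add e2 e3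
    exact (Real.exp_le_exp.mpr hb1).trans ((le_max_left _ _).trans (le_max_right _ _))
  · -- large interval case
    have htt₀ : t₀ ≤ t := by
      have h' : (1/2:ℝ)^K ≤ (b-a)^K := Real.rpow_le_rpow (by norm_num) hlarge.le hK0
      have : m * (1/2:ℝ)^K ≤ m * (b-a)^K := mul_le_mul_of_nonneg_left h' hm.le
      exact (ht₀def ▸ this).trans hlowab
    have hb2 : δ * (-Real.log t) ≤ D * max 0 (-Real.log t₀) := by
      have h1 : max 0 (-Real.log t) ≤ max 0 (-Real.log t₀) :=
        max_le_max le_rfl (neg_le_neg (Real.log_le_log ht₀ htt₀))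
      calc δ * (-Real.log t) ≤ δ * max 0 (-Real.log t) :=
            mul_le_mul_of_nonneg_left (le_max_right _ _) hδ0
        _ ≤ D * max 0 (-Real.log t₀) := mul_le_mul hδD h1 (le_max_left _ _) hD0
    exact (Real.exp_le_exp.mpr hb2).trans ((le_max_right _ _).trans (le_max_right _ _))
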